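/- arXiv:2104.07592 — 5 statements merged into one kernel-verified Lean document; each statement's English description precedes it below -/
import Mathlib

section
/- Let α : ℝ → ℝ be a locally Lipschitz extended class-K function (continuous, strictly increasing, and α(0) = 0), let T > 0, and let y : [0, T] → ℝ be differentiable with y′(t) ≥ −α(y(t)) for all t ∈ [0, T]. If y(0) ≥ 0, then y(t) ≥ 0 for all t ∈ [0, T]. -/
/-- Comparison lemma: if `α` is a locally Lipschitz extended class-K
function and `y` is differentiable on `[0, T]` with `y' ≥ -α ∘ y` there, then `y(0) ≥ 0`
implies `y(t) ≥ 0` on `[0, T]`. -/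
theorem stmt10 (α : ℝ → ℝ) (hαc : Continuous α) (hαm : StrictMono α) (hα0 : α 0 = 0)
    (hαl : LocallyLipschitz α) (T : ℝ) (hT : 0 < T) (y y' : ℝ → ℝ)
    (hderiv : ∀ t ∈ Set.Icc (0 : ℝ) T, HasDerivAt y (y' t) t)
    (hineq : ∀ t ∈ Set.Icc (0 : ℝ) T, -α (y t) ≤ y' t)
    (hy0 : 0 ≤ y 0) :
    ∀ t ∈ Set.Icc (0 : ℝ) T, 0 ≤ y t := by
  intro t ht
  by_contra hneg
  push_neg at hneg
  have hycont : ContinuousOn y (Set.Icc 0 T) := fun x hx =>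
    (hderiv x hx).continuousAt.continuousWithinAt
  have hsubIcc : Set.Icc (0 : ℝ) t ⊆ Set.Icc 0 T :=
    Set.Icc_subset_Icc le_rfl ht.2
  set S : Set ℝ := {u | u ∈ Set.Icc (0 : ℝ) t ∧ 0 ≤ y u} with hS
  have h0S : (0 : ℝ) ∈ S := ⟨⟨le_rfl, ht.1⟩, hy0⟩
  have hSne : S.Nonempty := ⟨0, h0S⟩
  have hSbdd : BddAbove S := ⟨t, fun u hu => hu.1.2⟩
  have hSclosed : IsClosed S := by
    have h1 : IsClosed (Set.Icc (0 : ℝ) t ∩ y ⁻¹' Set.Ici 0) := by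
      apply (hycont.mono hsubIcc).preimage_isClosed_of_isClosed isClosed_Icc isClosed_Ici
    exact h1
  set s := sSup S with hs
  have hsS : s ∈ S := hSclosed.csSup_mem hSne hSbdd
  have hst : s < t := by
    rcases lt_or_eq_of_le hsS.1.2 with h | h
    · exact h
    · exact absurd (h ▸ hsS.2) (not_le.2 hneg)
  have hys : 0 ≤ y s := hsS.2
  have hnegIoc : ∀ u ∈ Set.Ioc s t, y u < 0 := by
    intro u hu
    by_contra h
    push_neg at h
    have : u ∈ S := ⟨⟨le_trans hsS.1.1 hu.1.le, hu.2⟩, h⟩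
    exact absurd (le_csSup hSbdd this) (not_le.2 hu.1)
  have hsubIcc2 : Set.Icc s t ⊆ Set.Icc 0 T :=
    Set.Icc_subset_Icc hsS.1.1 ht.2
  have hmono : StrictMonoOn y (Set.Icc s t) := by
    apply StrictMonoOn.mono (s := Set.Icc s t)
    · apply strictMonoOn_of_deriv_pos (convex_Icc s t) (hycont.mono hsubIcc2)
      intro x hx
      rw [interior_Icc] at hx
      have hxIcc : x ∈ Set.Icc (0 : ℝ) T := hsubIcc2 ⟨hx.1.le, hx.2.le⟩
      rw [(hderiv x hxIcc).deriv]
      have hyx : y x < 0 := hnegIoc x ⟨hx.1, hx.2.le⟩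
      have : α (y x) < 0 := hα0 ▸ hαm hyx
      linarith [hineq x hxIcc]
    · exact le_rfl
  have := hmono (Set.left_mem_Icc.2 hst.le) (Set.right_mem_Icc.2 hst.le) hst
  linarith
end

section
/- Let F : ℝⁿ → 2^{ℝⁿ} be a set-valued map, let h : ℝⁿ → ℝ be continuously differentiable, and let α : ℝ → ℝ be a locally Lipschitz extended class-K function (continuous, strictly increasing, α(0) = 0). Assume that for every x′ ∈ ℝⁿ and every v ∈ F(x′), ∇h(x′)ᵀ v ≥ −α(h(x′)). Then for every T > 0 and every differentiable trajectory x : [0, T] → ℝⁿ satisfying the differential inclusion ẋ(t) ∈ F(x(t)) for all t ∈ [0, T], the condition h(x(0)) ≥ 0 implies h(x(t)) ≥ 0 for all t ∈ [0, T]; i.e. the set C = {x′ ∈ ℝⁿ : h(x′) ≥ 0} is (strongly) forward invariant along such trajectories. -/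
/-- Smooth barrier theorem for differential inclusions: if
`∇h(x')ᵀ v ≥ -α(h(x'))` for every `x'` and every `v ∈ F(x')`, then along every
differentiable solution of `ẋ ∈ F(x)` on `[0, T]`, `h(x(0)) ≥ 0` implies
`h(x(t)) ≥ 0` for all `t ∈ [0, T]`. -/
theorem stmt11 (n : ℕ) (F : (Fin n → ℝ) → Set (Fin n → ℝ))
    (h : (Fin n → ℝ) → ℝ) (hh : ContDiff ℝ 1 h)
    (α : ℝ → ℝ) (hαc : Continuous α) (hαm : StrictMono α) (hα0 : α 0 = 0)
    (hαl : LocallyLipschitz α)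
    (hbar : ∀ (x' : Fin n → ℝ), ∀ v ∈ F x', -α (h x') ≤ fderiv ℝ h x' v)
    (T : ℝ) (hT : 0 < T) (x x' : ℝ → (Fin n → ℝ))
    (hderiv : ∀ t ∈ Set.Icc (0 : ℝ) T, HasDerivAt x (x' t) t)
    (hincl : ∀ t ∈ Set.Icc (0 : ℝ) T, x' t ∈ F (x t))
    (hx0 : 0 ≤ h (x 0)) :
    ∀ t ∈ Set.Icc (0 : ℝ) T, 0 ≤ h (x t) := by
  set z : ℝ → ℝ := fun t => h (x t) with hz
  -- derivative of z
  have hzderiv : ∀ t ∈ Set.Icc (0 : ℝ) T,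
      HasDerivAt z (fderiv ℝ h (x t) (x' t)) t := by
    intro t ht
    have hdh : HasFDerivAt h (fderiv ℝ h (x t)) (x t) :=
      ((hh.differentiable one_ne_zero) (x t)).hasFDerivAt
    exact hdh.comp_hasDerivAt t (hderiv t ht)
  by_contra hcon
  push_neg at hcon
  obtain ⟨t₁, ht₁, ht₁neg⟩ := hcon
  have ht₁0 : (0 : ℝ) ≤ t₁ := ht₁.1
  have hIccsub : Set.Icc (0 : ℝ) t₁ ⊆ Set.Icc (0 : ℝ) T :=
    Set.Icc_subset_Icc le_rfl ht₁.2
  have hzc : ContinuousOn z (Set.Icc 0 t₁) := fun t ht =>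
    ((hzderiv t (hIccsub ht)).continuousAt).continuousWithinAt
  set S : Set ℝ := Set.Icc 0 t₁ ∩ z ⁻¹' Set.Ici 0 with hS
  have hSclosed : IsClosed S :=
    hzc.preimage_isClosed_of_isClosed isClosed_Icc isClosed_Ici
  have hSne : S.Nonempty := ⟨0, ⟨le_rfl, ht₁0⟩, hx0⟩
  have hSbdd : BddAbove S := ⟨t₁, fun t ht => ht.1.2⟩
  set s := sSup S with hsdef
  have hsmem : s ∈ S := hSclosed.csSup_mem hSne hSbdd
  have hs0 : 0 ≤ s := hsmem.1.1
  have hst₁ : s ≤ t₁ := hsmem.1.2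
  have hzs : 0 ≤ z s := hsmem.2
  have hsne : s ≠ t₁ := by
    intro he
    rw [he] at hzs
    exact absurd (lt_of_le_of_lt hzs ht₁neg) (lt_irrefl 0)
  have hslt : s < t₁ := lt_of_le_of_ne hst₁ hsne
  -- on (s, t₁], z < 0
  have hneg : ∀ t ∈ Set.Ioc s t₁, z t < 0 := by
    intro t ht
    by_contra hge
    push_neg at hge
    have : t ∈ S := ⟨⟨le_trans hs0 ht.1.le, ht.2⟩, hge⟩
    exact absurd (le_csSup hSbdd this) (not_le.mpr ht.1)
  -- z is strictly monotone on [s, t₁]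
  have hmono : StrictMonoOn z (Set.Icc s t₁) := by
    apply strictMonoOn_of_deriv_pos (convex_Icc s t₁)
    · exact hzc.mono (Set.Icc_subset_Icc hs0 le_rfl)
    · intro t ht
      rw [interior_Icc] at ht
      have htT : t ∈ Set.Icc 0 T :=
        ⟨le_trans hs0 ht.1.le, le_trans ht.2.le ht₁.2⟩
      have hd := hzderiv t htT
      rw [hd.deriv]
      have hlt : z t < 0 := hneg t ⟨ht.1, ht.2.le⟩
      have hαlt : α (z t) < 0 := by
        have := hαm hlt
        rwa [hα0] at this
      calc (0:ℝ) < -α (z t) := by linarith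
        _ ≤ fderiv ℝ h (x t) (x' t) := hbar (x t) (x' t) (hincl t htT)
  have : z s < z t₁ :=
    hmono ⟨le_rfl, hst₁⟩ ⟨hst₁, le_rfl⟩ hslt
  linarith
end

section
/- Let f : ℝⁿ → ℝⁿ, g : ℝⁿ → ℝ^{n×m}, and u : ℝⁿ → ℝ^m be continuous, let p > 0 and ψ₁, …, ψ_p : ℝⁿ → ℝⁿ be continuous, and define D_A(x′) = co{ψ₁(x′), …, ψ_p(x′)} for all x′ ∈ ℝⁿ. Let h : ℝⁿ → ℝ be continuously differentiable and let α : ℝ → ℝ be a locally Lipschitz extended class-K function. Assume that for every x′ ∈ ℝⁿ, ∇h(x′)ᵀ( f(x′) + g(x′)u(x′) ) ≥ −α(h(x′)) − min_{i ∈ {1,…,p}} ∇h(x′)ᵀψᵢ(x′). Then for every T > 0 and every differentiable trajectory x : [0, T] → ℝⁿ satisfying ẋ(t) ∈ f(x(t)) + g(x(t))u(x(t)) + D_A(x(t)) for all t ∈ [0, T], the condition h(x(0)) ≥ 0 implies h(x(t)) ≥ 0 for all t ∈ [0, T]. -/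
open scoped Matrix

/-- Robust CBFs for additive disturbances (Theorem 2 of the paper,
specialized to differentiable solutions): if
`∇h(x')ᵀ(f(x') + g(x')u(x')) ≥ -α(h(x')) - minᵢ ∇h(x')ᵀψᵢ(x')` for all `x'`, then along
every differentiable solution of `ẋ ∈ f(x) + g(x)u(x) + co{ψ₁(x),…,ψ_p(x)}` on `[0, T]`,
`h(x(0)) ≥ 0` implies `h(x(t)) ≥ 0` on `[0, T]`. -/
theorem stmt12 (n m p : ℕ) (hp : 0 < p)
    (f : (Fin n → ℝ) → (Fin n → ℝ)) (hf : Continuous f)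
    (g : (Fin n → ℝ) → Matrix (Fin n) (Fin m) ℝ) (hg : Continuous g)
    (u : (Fin n → ℝ) → (Fin m → ℝ)) (hu : Continuous u)
    (ψ : Fin p → (Fin n → ℝ) → (Fin n → ℝ)) (hψ : ∀ i, Continuous (ψ i))
    (h : (Fin n → ℝ) → ℝ) (hh : ContDiff ℝ 1 h)
    (α : ℝ → ℝ) (hαc : Continuous α) (hαm : StrictMono α) (hα0 : α 0 = 0)
    (hαl : LocallyLipschitz α)
    (hbar : ∀ x' : Fin n → ℝ,
      -α (h x') - (⨅ i : Fin p, fderiv ℝ h x' (ψ i x')) ≤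
        fderiv ℝ h x' (f x' + g x' *ᵥ u x'))
    (T : ℝ) (hT : 0 < T) (x x' : ℝ → (Fin n → ℝ))
    (hderiv : ∀ t ∈ Set.Icc (0 : ℝ) T, HasDerivAt x (x' t) t)
    (hincl : ∀ t ∈ Set.Icc (0 : ℝ) T,
      ∃ d ∈ convexHull ℝ (Set.range fun i => ψ i (x t)),
        x' t = f (x t) + g (x t) *ᵥ u (x t) + d)
    (hx0 : 0 ≤ h (x 0)) :
    ∀ t ∈ Set.Icc (0 : ℝ) T, 0 ≤ h (x t) := by

  -- y t := h (x t)
  have hdiff : ∀ t ∈ Set.Icc (0 : ℝ) T,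
      HasDerivAt (fun τ => h (x τ)) (fderiv ℝ h (x t) (x' t)) t := by
    intro t ht
    exact ((hh.differentiable one_ne_zero (x t)).hasFDerivAt).comp_hasDerivAt t (hderiv t ht)
  have hineq : ∀ t ∈ Set.Icc (0 : ℝ) T, -α (h (x t)) ≤ fderiv ℝ h (x t) (x' t) := by
    intro t ht
    obtain ⟨d, hd, heq⟩ := hincl t ht
    set L := fderiv ℝ h (x t) with hL
    have hlin : IsLinearMap ℝ (fun z => L z) := ⟨L.map_add, L.map_smul⟩
    have hinf : (⨅ i : Fin p, L (ψ i (x t))) ≤ L d := by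
      have : convexHull ℝ (Set.range fun i => ψ i (x t)) ⊆
          {z | (⨅ i : Fin p, L (ψ i (x t))) ≤ L z} := by
        apply convexHull_min
        · rintro z ⟨i, rfl⟩
          exact ciInf_le (Finite.bddBelow_range fun j => L (ψ j (x t))) i
        · exact convex_halfSpace_ge hlin _
      exact this hd
    have := hbar (x t)
    calc -α (h (x t)) = (-α (h (x t)) - (⨅ i : Fin p, L (ψ i (x t))))
          + (⨅ i : Fin p, L (ψ i (x t))) := by ring
      _ ≤ L (f (x t) + g (x t) *ᵥ u (x t)) + L d := add_le_add this hinf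
      _ = fderiv ℝ h (x t) (x' t) := by rw [heq]; simp [map_add, hL]
  intro t₀ ht₀
  by_contra hneg
  push_neg at hneg
  -- set of times in [0, t₀] where h(x t) ≥ 0
  set S : Set ℝ := Set.Icc 0 t₀ ∩ {t | 0 ≤ h (x t)} with hS
  have hsub : Set.Icc (0:ℝ) t₀ ⊆ Set.Icc 0 T := Set.Icc_subset_Icc le_rfl ht₀.2
  have hcont : ContinuousOn (fun τ => h (x τ)) (Set.Icc 0 t₀) := fun t ht =>
    ((hdiff t (hsub ht)).continuousAt).continuousWithinAt
  have hSclosed : IsClosed S := by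
    have := hcont.preimage_isClosed_of_isClosed isClosed_Icc (isClosed_Ici (a := (0:ℝ)))
    simpa [hS, Set.preimage, Set.mem_Ici] using this
  have h0S : (0:ℝ) ∈ S := ⟨⟨le_rfl, ht₀.1⟩, hx0⟩
  have hScomp : IsCompact S := (isCompact_Icc.of_isClosed_subset hSclosed
    (Set.inter_subset_left))
  have hsmem : sSup S ∈ S := hScomp.sSup_mem ⟨0, h0S⟩
  set s := sSup S with hs
  have hs0 : 0 ≤ s := hsmem.1.1
  have hst : s ≤ t₀ := hsmem.1.2
  have hys : 0 ≤ h (x s) := hsmem.2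
  have hslt : s < t₀ := hst.lt_of_ne (fun he => by
    rw [he] at hys; exact absurd hys (not_le.mpr hneg))
  -- h (x s) = 0
  have hys0 : h (x s) = 0 := by
    rcases eq_or_lt_of_le hys with he | hpos
    · exact he.symm
    · exfalso
      have hca : ContinuousAt (fun τ => h (x τ)) s :=
        (hdiff s (hsub ⟨hs0, hst⟩)).continuousAt
      have hev : ∀ᶠ τ in nhdsWithin s (Set.Ioi s), 0 < h (x τ) :=
        ((hca.eventually (eventually_gt_nhds hpos)).filter_mono nhdsWithin_le_nhds)
      have hev2 : ∀ᶠ τ in nhdsWithin s (Set.Ioi s), τ ∈ Set.Ioo s t₀ :=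
        Ioo_mem_nhdsGT_of_mem ⟨le_rfl, hslt⟩
      obtain ⟨τ, hτpos, hτmem⟩ := (hev.and hev2).exists
      have : τ ∈ S := ⟨⟨hs0.trans hτmem.1.le, hτmem.2.le⟩, hτpos.le⟩
      exact absurd (le_csSup hScomp.bddAbove this) (not_le.mpr hτmem.1)
  -- MVT on [s, t₀]
  obtain ⟨c, hc, hceq⟩ := exists_hasDerivAt_eq_slope (fun τ => h (x τ))
    (fun τ => fderiv ℝ h (x τ) (x' τ)) hslt
    (hcont.mono (Set.Icc_subset_Icc hs0 le_rfl))
    (fun τ hτ => hdiff τ (hsub ⟨hs0.trans hτ.1.le, hτ.2.le⟩))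
  have hcneg : h (x c) < 0 := by
    by_contra hc0
    push_neg at hc0
    have : c ∈ S := ⟨⟨hs0.trans hc.1.le, hc.2.le⟩, hc0⟩
    exact absurd (le_csSup hScomp.bddAbove this) (not_le.mpr hc.1)
  have hslope : fderiv ℝ h (x c) (x' c) < 0 := by
    rw [hceq, hys0]
    apply div_neg_of_neg_of_pos
    · simpa using hneg
    · linarith [hc.1, hc.2]
  have hge : -α (h (x c)) ≤ fderiv ℝ h (x c) (x' c) :=
    hineq c (hsub ⟨hs0.trans hc.1.le, hc.2.le⟩)
  have : α (h (x c)) < α 0 := hαm hcneg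
  rw [hα0] at this
  linarith
end

section
/- Let f : ℝⁿ → ℝⁿ, g : ℝⁿ → ℝ^{n×m}, and u : ℝⁿ → ℝ^m be continuous, let p > 0 and ψ₁, …, ψ_p : ℝⁿ → ℝ^{n×m} be continuous matrix-valued functions, and define D_M(x′) = co{ψ₁(x′), …, ψ_p(x′)} ⊆ ℝ^{n×m} for all x′ ∈ ℝⁿ. Let h : ℝⁿ → ℝ be continuously differentiable and let α : ℝ → ℝ be a locally Lipschitz extended class-K function. Assume that for every x′ ∈ ℝⁿ and every i ∈ {1,…,p}, ∇h(x′)ᵀ( f(x′) + (g(x′) + ψᵢ(x′)) u(x′) ) ≥ −α(h(x′)). Then for every T > 0 and every differentiable trajectory x : [0, T] → ℝⁿ satisfying ẋ(t) ∈ f(x(t)) + (g(x(t)) + D_M(x(t))) u(x(t)) for all t ∈ [0, T], the condition h(x(0)) ≥ 0 implies h(x(t)) ≥ 0 for all t ∈ [0, T]. -/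
open scoped Matrix

/-- Robust CBFs for multiplicative (control-multiplying) disturbances
(Theorem 3 of the paper, specialized to differentiable solutions): if
`∇h(x')ᵀ(f(x') + (g(x') + ψᵢ(x'))u(x')) ≥ -α(h(x'))` for all `x'` and all `i`, then along
every differentiable solution of `ẋ ∈ f(x) + (g(x) + co{ψ₁(x),…,ψ_p(x)})u(x)` on `[0, T]`,
`h(x(0)) ≥ 0` implies `h(x(t)) ≥ 0` on `[0, T]`. -/
theorem stmt13 (n m p : ℕ) (hp : 0 < p)
    (f : (Fin n → ℝ) → (Fin n → ℝ)) (hf : Continuous f)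
    (g : (Fin n → ℝ) → Matrix (Fin n) (Fin m) ℝ) (hg : Continuous g)
    (u : (Fin n → ℝ) → (Fin m → ℝ)) (hu : Continuous u)
    (ψ : Fin p → (Fin n → ℝ) → Matrix (Fin n) (Fin m) ℝ) (hψ : ∀ i, Continuous (ψ i))
    (h : (Fin n → ℝ) → ℝ) (hh : ContDiff ℝ 1 h)
    (α : ℝ → ℝ) (hαc : Continuous α) (hαm : StrictMono α) (hα0 : α 0 = 0)
    (hαl : LocallyLipschitz α)
    (hbar : ∀ (x' : Fin n → ℝ) (i : Fin p),
      -α (h x') ≤ fderiv ℝ h x' (f x' + (g x' + ψ i x') *ᵥ u x'))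
    (T : ℝ) (hT : 0 < T) (x x' : ℝ → (Fin n → ℝ))
    (hderiv : ∀ t ∈ Set.Icc (0 : ℝ) T, HasDerivAt x (x' t) t)
    (hincl : ∀ t ∈ Set.Icc (0 : ℝ) T,
      ∃ M ∈ convexHull ℝ (Set.range fun i => ψ i (x t)),
        x' t = f (x t) + (g (x t) + M) *ᵥ u (x t))
    (hx0 : 0 ≤ h (x 0)) :
    ∀ t ∈ Set.Icc (0 : ℝ) T, 0 ≤ h (x t) := by

  -- key derivative bound along trajectory
  have key : ∀ t ∈ Set.Icc (0:ℝ) T, -α (h (x t)) ≤ fderiv ℝ h (x t) (x' t) := by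
    intro t ht
    obtain ⟨M, hM, hx'⟩ := hincl t ht
    rw [hx']
    have hS : convexHull ℝ (Set.range fun i => ψ i (x t)) ⊆
        {M | -α (h (x t)) ≤ fderiv ℝ h (x t) (f (x t) + (g (x t) + M) *ᵥ u (x t))} := by
      apply convexHull_min
      · rintro _ ⟨i, rfl⟩; exact hbar (x t) i
      · intro M1 h1 M2 h2 a b ha hb hab
        simp only [Set.mem_setOf_eq] at h1 h2 ⊢
        have hEq : f (x t) + (g (x t) + (a • M1 + b • M2)) *ᵥ u (x t)
            = a • (f (x t) + (g (x t) + M1) *ᵥ u (x t))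
              + b • (f (x t) + (g (x t) + M2) *ᵥ u (x t)) := by
          simp only [Matrix.add_mulVec, Matrix.smul_mulVec, smul_add]
          match_scalars <;> linarith
        rw [hEq, map_add, map_smul, map_smul]
        have := smul_le_smul_of_nonneg_left h1 ha
        have := smul_le_smul_of_nonneg_left h2 hb
        simp only [smul_eq_mul] at *
        have hsum : a * -α (h (x t)) + b * -α (h (x t)) = -α (h (x t)) := by
          rw [← add_mul, hab, one_mul]
        linarith
    exact hS hM
  have hdiffh : Differentiable ℝ h := hh.differentiable one_ne_zero
  set v : ℝ → ℝ := fun t => h (x t) with hv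
  have hdv : ∀ t ∈ Set.Icc (0:ℝ) T, HasDerivAt v (fderiv ℝ h (x t) (x' t)) t := by
    intro t ht
    exact ((hdiffh (x t)).hasFDerivAt).comp_hasDerivAt t (hderiv t ht)
  intro t1 ht1
  by_contra hneg
  push_neg at hneg
  -- define s = last time v ≥ 0 before t1
  set A : Set ℝ := {t | t ∈ Set.Icc (0:ℝ) t1 ∧ 0 ≤ v t} with hA
  have h0A : (0:ℝ) ∈ A := ⟨⟨le_refl 0, ht1.1⟩, hx0⟩
  have hAne : A.Nonempty := ⟨0, h0A⟩
  have hAbdd : BddAbove A := ⟨t1, fun t htA => htA.1.2⟩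
  set s := sSup A with hs
  have hs0 : 0 ≤ s := le_csSup hAbdd h0A
  have hst1 : s ≤ t1 := csSup_le hAne (fun t htA => htA.1.2)
  have hsIccT : s ∈ Set.Icc (0:ℝ) T := ⟨hs0, hst1.trans ht1.2⟩
  have hsub : Set.Icc s t1 ⊆ Set.Icc (0:ℝ) T := fun t ht =>
    ⟨hs0.trans ht.1, ht.2.trans ht1.2⟩
  -- v s ≥ 0
  have hvs : 0 ≤ v s := by
    have hcontAt : ContinuousAt v s := (hdv s hsIccT).continuousAt
    have hsclos : s ∈ closure A := csSup_mem_closure hAne hAbdd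
    have h1 : v s ∈ closure (v '' A) :=
      hcontAt.continuousWithinAt.mem_closure_image hsclos
    have h2 : closure (v '' A) ⊆ Set.Ici 0 := by
      apply closure_minimal _ isClosed_Ici
      rintro _ ⟨t, htA, rfl⟩
      exact htA.2
    exact h2 h1
  have hslt : s < t1 := by
    rcases lt_or_eq_of_le hst1 with hlt | heq
    · exact hlt
    · exact absurd (heq ▸ hvs) (not_le.mpr hneg)
  -- v < 0 on (s, t1]
  have hvneg : ∀ t ∈ Set.Ioc s t1, v t < 0 := by
    intro t htm
    by_contra hc
    push_neg at hc
    have : t ∈ A := ⟨⟨hs0.trans htm.1.le, htm.2⟩, hc⟩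
    exact absurd (le_csSup hAbdd this) (not_le.mpr htm.1)
  -- v strictly increasing on [s, t1]
  have hmono : StrictMonoOn v (Set.Icc s t1) := by
    apply strictMonoOn_of_deriv_pos (convex_Icc s t1)
    · intro t ht
      exact ((hdv t (hsub ht)).continuousAt).continuousWithinAt
    · intro t ht
      rw [interior_Icc] at ht
      have htT : t ∈ Set.Icc (0:ℝ) T := hsub ⟨ht.1.le, ht.2.le⟩
      have hd := (hdv t htT).deriv
      rw [hd]
      have hvt : v t < 0 := hvneg t ⟨ht.1, ht.2.le⟩
      have : α (v t) < 0 := by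
        have := hαm hvt
        rwa [hα0] at this
      have hk := key t htT
      linarith
  have := hmono (Set.left_mem_Icc.mpr hslt.le) (Set.right_mem_Icc.mpr hslt.le) hslt
  linarith
end

section
/- Let a¹, a² ∈ ℝ^{n×m} with a¹_{ij} ≤ a²_{ij} for all i, j, let D = {M ∈ ℝ^{n×m} : a¹_{ij} ≤ M_{ij} ≤ a²_{ij} for all i, j}, and let v ∈ ℝⁿ and u ∈ ℝ^m. Let Φ = {φ₁, …, φ_{2^m}} ⊆ ℝ^m be the set of vertices of the m-orthotope vᵀD, i.e. the vectors whose j-th coordinate is either Σ_{i} min(vᵢ a¹_{ij}, vᵢ a²_{ij}) or Σ_{i} max(vᵢ a¹_{ij}, vᵢ a²_{ij}). Then min_{M ∈ D} vᵀ M u exists and equals min_{k ∈ {1,…,2^m}} φₖᵀ u; in particular, for any c ∈ ℝ, vᵀ M u ≥ c holds for every M ∈ D if and only if φₖᵀ u ≥ c for every k ∈ {1,…,2^m}. -/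
open scoped Matrix

/-- (Proposition 2 of the paper, pointwise.) For an interval matrix
`D = {M : a¹ᵢⱼ ≤ Mᵢⱼ ≤ a²ᵢⱼ}`, the minimum of `vᵀ M u` over `M ∈ D` exists and equals the
minimum of `φᵀu` over the vertices `φ` of the m-orthotope `vᵀD`; in particular
`vᵀ M u ≥ c` for all `M ∈ D` iff `φᵀ u ≥ c` for all vertices `φ`. -/
theorem stmt14 (n m : ℕ) (a₁ a₂ : Matrix (Fin n) (Fin m) ℝ)
    (hle : ∀ i j, a₁ i j ≤ a₂ i j) (v : Fin n → ℝ) (u : Fin m → ℝ)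
    (D : Set (Matrix (Fin n) (Fin m) ℝ))
    (hD : D = {M | ∀ i j, a₁ i j ≤ M i j ∧ M i j ≤ a₂ i j})
    (Φ : Set (Fin m → ℝ))
    (hΦ : Φ = {φ | ∀ j, φ j = (∑ i, min (v i * a₁ i j) (v i * a₂ i j)) ∨
                    φ j = (∑ i, max (v i * a₁ i j) (v i * a₂ i j))}) :
    ∃ φ₀ ∈ Φ,
      (∀ M ∈ D, φ₀ ⬝ᵥ u ≤ v ⬝ᵥ (M *ᵥ u)) ∧
      (∃ M ∈ D, v ⬝ᵥ (M *ᵥ u) = φ₀ ⬝ᵥ u) ∧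
      (∀ φ ∈ Φ, φ₀ ⬝ᵥ u ≤ φ ⬝ᵥ u) ∧
      (∀ c : ℝ, (∀ M ∈ D, c ≤ v ⬝ᵥ (M *ᵥ u)) ↔ (∀ φ ∈ Φ, c ≤ φ ⬝ᵥ u)) := by
  subst hD hΦ
  set lo : Fin m → ℝ := fun j => ∑ i, min (v i * a₁ i j) (v i * a₂ i j) with hlo
  set hi : Fin m → ℝ := fun j => ∑ i, max (v i * a₁ i j) (v i * a₂ i j) with hhi
  set φ₀ : Fin m → ℝ := fun j => if 0 ≤ u j then lo j else hi j with hφ₀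
  -- key rewriting: v ⬝ᵥ (M *ᵥ u) = ∑ j (∑ i v i * M i j) * u j
  have key : ∀ M : Matrix (Fin n) (Fin m) ℝ,
      v ⬝ᵥ (M *ᵥ u) = ∑ j, (∑ i, v i * M i j) * u j := by
    intro M
    rw [Matrix.dotProduct_mulVec]
    simp [dotProduct, Matrix.vecMul, dotProduct]
  have hmem : φ₀ ∈ {φ | ∀ j, φ j = lo j ∨ φ j = hi j} := by
    intro j
    by_cases h : 0 ≤ u j <;> simp [hφ₀, h]
  -- bounds for entries of members of D
  have hbound : ∀ M ∈ {M : Matrix (Fin n) (Fin m) ℝ | ∀ i j, a₁ i j ≤ M i j ∧ M i j ≤ a₂ i j},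
      ∀ j, lo j ≤ (∑ i, v i * M i j) ∧ (∑ i, v i * M i j) ≤ hi j := by
    intro M hM j
    constructor
    · apply Finset.sum_le_sum
      intro i _
      rcases le_or_gt 0 (v i) with h | h
      · exact le_trans (min_le_left _ _) (mul_le_mul_of_nonneg_left (hM i j).1 h)
      · exact le_trans (min_le_right _ _) (mul_le_mul_of_nonpos_left (hM i j).2 h.le)
    · apply Finset.sum_le_sum
      intro i _
      rcases le_or_gt 0 (v i) with h | h
      · exact le_trans (mul_le_mul_of_nonneg_left (hM i j).2 h) (le_max_right _ _)
      · exact le_trans (mul_le_mul_of_nonpos_left (hM i j).1 h.le) (le_max_left _ _)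
  have hlohi : ∀ j, lo j ≤ hi j := by
    intro j
    exact Finset.sum_le_sum fun i _ => min_le_max
  -- φ₀ j * u j is minimal among t * u j for lo j ≤ t ≤ hi j
  have hterm : ∀ (j : Fin m) (t : ℝ), lo j ≤ t → t ≤ hi j → φ₀ j * u j ≤ t * u j := by
    intro j t h1 h2
    by_cases h : 0 ≤ u j
    · simp only [hφ₀, if_pos h]
      exact mul_le_mul_of_nonneg_right h1 h
    · simp only [hφ₀, if_neg h]
      exact mul_le_mul_of_nonpos_right h2 (le_of_not_ge h)
  have h1 : ∀ M ∈ {M : Matrix (Fin n) (Fin m) ℝ | ∀ i j, a₁ i j ≤ M i j ∧ M i j ≤ a₂ i j},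
      φ₀ ⬝ᵥ u ≤ v ⬝ᵥ (M *ᵥ u) := by
    intro M hM
    rw [key]
    apply Finset.sum_le_sum
    intro j _
    exact hterm j _ (hbound M hM j).1 (hbound M hM j).2
  have h3 : ∀ φ ∈ {φ : Fin m → ℝ | ∀ j, φ j = lo j ∨ φ j = hi j}, φ₀ ⬝ᵥ u ≤ φ ⬝ᵥ u := by
    intro φ hφ
    apply Finset.sum_le_sum
    intro j _
    rcases hφ j with h | h <;> rw [h]
    · exact hterm j _ le_rfl (hlohi j)
    · exact hterm j _ (hlohi j) le_rfl
  -- witness matrix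
  set M₀ : Matrix (Fin n) (Fin m) ℝ := fun i j =>
    if 0 ≤ u j then (if 0 ≤ v i then a₁ i j else a₂ i j)
    else (if 0 ≤ v i then a₂ i j else a₁ i j) with hM₀
  have hM₀mem : M₀ ∈ {M : Matrix (Fin n) (Fin m) ℝ | ∀ i j, a₁ i j ≤ M i j ∧ M i j ≤ a₂ i j} := by
    intro i j
    simp only [hM₀]
    by_cases h : 0 ≤ u j <;> by_cases h' : 0 ≤ v i <;>
      simp [h, h', hle i j]
  have hM₀val : v ⬝ᵥ (M₀ *ᵥ u) = φ₀ ⬝ᵥ u := by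
    rw [key]
    apply Finset.sum_congr rfl
    intro j _
    congr 1
    by_cases h : 0 ≤ u j
    · simp only [hφ₀, if_pos h, hlo]
      apply Finset.sum_congr rfl
      intro i _
      by_cases h' : 0 ≤ v i
      · simp only [hM₀, if_pos h, if_pos h']
        rw [min_eq_left (mul_le_mul_of_nonneg_left (hle i j) h')]
      · simp only [hM₀, if_pos h, if_neg h']
        rw [min_eq_right (mul_le_mul_of_nonpos_left (hle i j) (le_of_not_ge h'))]
    · simp only [hφ₀, if_neg h, hhi]
      apply Finset.sum_congr rfl
      intro i _
      by_cases h' : 0 ≤ v i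
      · simp only [hM₀, if_neg h, if_pos h']
        rw [max_eq_right (mul_le_mul_of_nonneg_left (hle i j) h')]
      · simp only [hM₀, if_neg h, if_neg h']
        rw [max_eq_left (mul_le_mul_of_nonpos_left (hle i j) (le_of_not_ge h'))]
  refine ⟨φ₀, hmem, h1, ⟨M₀, hM₀mem, hM₀val⟩, h3, ?_⟩
  intro c
  constructor
  · intro h φ hφ
    calc c ≤ v ⬝ᵥ (M₀ *ᵥ u) := h M₀ hM₀mem
    _ = φ₀ ⬝ᵥ u := hM₀val
    _ ≤ φ ⬝ᵥ u := h3 φ hφ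
  · intro h M hM
    exact le_trans (h φ₀ hmem) (h1 M hM)
end
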